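/- For all real c₁, c₂ > 0, one has the identity 2·A(c₁,c₂)² + (c₁+c₂)²/(e^{c₁+c₂} − 1) − c₁²/(e^{c₁} − 1) − c₂²/(e^{c₂} − 1) = ∫_0^{c₁} x²e^x/(e^x − 1)² dx − ∫_{c₂}^{c₁+c₂} x²e^x/(e^x − 1)² dx. Moreover, if additionally c₁ ≤ c₂, this quantity is at least ∫_0^{c₁} x²e^x/(e^x − 1)² dx − ∫_{c₁}^{2c₁} x²e^x/(e^x − 1)² dx, which is strictly positive. -/

import Mathlib

open Set MeasureTheory intervalIntegral

lemma expm1_pos {x : ℝ} (hx : 0 < x) : 0 < Real.exp x - 1 := by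
  have := Real.add_one_lt_exp (x := x) hx.ne'
  linarith

lemma f_le_one {x : ℝ} (hx : 0 ≤ x) : x / (Real.exp x - 1) ≤ 1 := by
  rcases eq_or_lt_of_le hx with h | h
  · simp [← h]
  · rw [div_le_one (expm1_pos h)]
    have := Real.add_one_le_exp x
    linarith

lemma f_nonneg {x : ℝ} (hx : 0 ≤ x) : 0 ≤ x / (Real.exp x - 1) := by
  rcases eq_or_lt_of_le hx with h | h
  · simp [← h]
  · have := expm1_pos h; positivity

/-- `f` is antitone on `(0,∞)`. -/
lemma f_anti {a b : ℝ} (ha : 0 < a) (hab : a ≤ b) :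
    b / (Real.exp b - 1) ≤ a / (Real.exp a - 1) := by
  rcases eq_or_lt_of_le hab with rfl | h
  · exact le_rfl
  have hb : 0 < b := ha.trans h
  have hslope : (Real.exp a - 1) / a ≤ (Real.exp b - 1) / b := by
    have := convexOn_exp.secant_mono (a := 0) (x := a) (y := b)
      (Set.mem_univ _) (Set.mem_univ _) (Set.mem_univ _) ha.ne' hb.ne' hab
    simpa using this
  rw [div_le_div_iff₀ (expm1_pos hb) (expm1_pos ha)]
  rw [div_le_div_iff₀ ha hb] at hslope
  nlinarith

lemma strictConvexOn_sinh : StrictConvexOn ℝ (Set.Ici (0:ℝ)) Real.sinh := by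
  apply strictConvexOn_of_deriv2_pos (convex_Ici 0) Real.continuous_sinh.continuousOn
  intro x hx
  rw [interior_Ici] at hx
  have h2 : deriv^[2] Real.sinh = Real.sinh := by
    ext y
    simp [Function.iterate_succ_apply', Real.deriv_sinh, Real.deriv_cosh]
  rw [h2]
  exact Real.sinh_pos_iff.mpr hx

/-- rewrite of g in terms of sinh -/
lemma g_eq_sinh (x : ℝ) (hx : 0 < x) :
    x ^ 2 * Real.exp x / (Real.exp x - 1) ^ 2 = (x / (2 * Real.sinh (x/2))) ^ 2 := by
  have h1 : Real.exp x - 1 = Real.exp (x/2) * (2 * Real.sinh (x/2)) := by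
    have e1 : Real.exp (x/2) * Real.exp (x/2) = Real.exp x := by
      rw [← Real.exp_add]; ring_nf
    have e2 : Real.exp (x/2) * Real.exp (-(x/2)) = 1 := by
      rw [← Real.exp_add]; simp
    rw [Real.sinh_eq]
    linear_combination e2 - e1
  have hs : Real.sinh (x/2) ≠ 0 := (Real.sinh_pos_iff.mpr (by linarith)).ne'
  have he : Real.exp (x/2) ≠ 0 := (Real.exp_pos _).ne'
  have hex : Real.exp x = Real.exp (x/2) * Real.exp (x/2) := by
    rw [← Real.exp_add]; ring_nf
  rw [h1, hex]
  field_simp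

/-- g strictly antitone on (0,∞) -/
lemma g_anti_strict {a b : ℝ} (ha : 0 < a) (hab : a < b) :
    b ^ 2 * Real.exp b / (Real.exp b - 1) ^ 2 < a ^ 2 * Real.exp a / (Real.exp a - 1) ^ 2 := by
  have hb : 0 < b := ha.trans hab
  rw [g_eq_sinh a ha, g_eq_sinh b hb]
  have hsa : 0 < Real.sinh (a/2) := Real.sinh_pos_iff.mpr (by linarith)
  have hsb : 0 < Real.sinh (b/2) := Real.sinh_pos_iff.mpr (by linarith)
  have hslope : Real.sinh (a/2) / (a/2) < Real.sinh (b/2) / (b/2) := by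
    have := strictConvexOn_sinh.secant_strict_mono (a := 0) (x := a/2) (y := b/2)
      (Set.mem_Ici.mpr le_rfl) (Set.mem_Ici.mpr (by linarith)) (Set.mem_Ici.mpr (by linarith))
      (by positivity : (0:ℝ) < a/2).ne' (by positivity : (0:ℝ) < b/2).ne' (by linarith)
    simpa using this
  have key : b / (2 * Real.sinh (b/2)) < a / (2 * Real.sinh (a/2)) := by
    rw [div_lt_div_iff₀ (by positivity) (by positivity)]
    rw [div_lt_div_iff₀ (by positivity) (by positivity)] at hslope
    nlinarith
  have hbpos : 0 < b / (2 * Real.sinh (b/2)) := by positivity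
  exact pow_lt_pow_left₀ key hbpos.le (by norm_num) |>.trans_le le_rfl

lemma g_anti {a b : ℝ} (ha : 0 < a) (hab : a ≤ b) :
    b ^ 2 * Real.exp b / (Real.exp b - 1) ^ 2 ≤ a ^ 2 * Real.exp a / (Real.exp a - 1) ^ 2 := by
  rcases eq_or_lt_of_le hab with rfl | h
  · exact le_rfl
  · exact (g_anti_strict ha h).le

lemma meas_f : Measurable (fun x : ℝ => x / (Real.exp x - 1)) :=
  measurable_id.div ((Real.measurable_exp).sub measurable_const)

lemma meas_g : Measurable (fun x : ℝ => x ^ 2 * Real.exp x / (Real.exp x - 1) ^ 2) :=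
  (((measurable_id.pow_const 2).mul Real.measurable_exp).div
    (((Real.measurable_exp).sub measurable_const).pow_const 2))

lemma intInt_f {a b : ℝ} (ha : 0 ≤ a) (hb : 0 ≤ b) :
    IntervalIntegrable (fun x : ℝ => x / (Real.exp x - 1)) volume a b := by
  rw [intervalIntegrable_iff]
  apply Integrable.mono' (g := fun _ : ℝ => (1:ℝ))
  · exact integrableOn_const measure_Ioc_lt_top.ne
  · exact meas_f.aestronglyMeasurable.restrict
  · filter_upwards [ae_restrict_mem measurableSet_uIoc] with x hx
    rcases hx with ⟨h1, _⟩
    have hx0 : 0 < x := lt_of_le_of_lt (le_min ha hb) h1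
    rw [Real.norm_eq_abs, abs_of_nonneg (f_nonneg hx0.le)]
    exact f_le_one hx0.le

lemma g_le {x : ℝ} (hx : 0 ≤ x) : x ^ 2 * Real.exp x / (Real.exp x - 1) ^ 2 ≤ Real.exp x := by
  rcases eq_or_lt_of_le hx with h | h
  · simp [← h]
  · have hd : 0 < Real.exp x - 1 := expm1_pos h
    have hrw : x ^ 2 * Real.exp x / (Real.exp x - 1) ^ 2
        = (x / (Real.exp x - 1)) ^ 2 * Real.exp x := by
      field_simp
    rw [hrw]
    have h1 : (x / (Real.exp x - 1)) ^ 2 ≤ 1 :=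
      pow_le_one₀ (f_nonneg hx) (f_le_one hx)
    nlinarith [Real.exp_pos x, h1]

lemma g_nonneg {x : ℝ} : 0 ≤ x ^ 2 * Real.exp x / (Real.exp x - 1) ^ 2 := by positivity

lemma intInt_g {a b : ℝ} (ha : 0 ≤ a) (hb : 0 ≤ b) :
    IntervalIntegrable (fun x : ℝ => x ^ 2 * Real.exp x / (Real.exp x - 1) ^ 2) volume a b := by
  rw [intervalIntegrable_iff]
  apply Integrable.mono' (g := fun _ : ℝ => Real.exp (max a b))
  · exact integrableOn_const measure_Ioc_lt_top.ne
  · exact meas_g.aestronglyMeasurable.restrict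
  · filter_upwards [ae_restrict_mem measurableSet_uIoc] with x hx
    rcases hx with ⟨h1, h2⟩
    have hx0 : 0 < x := lt_of_le_of_lt (le_min ha hb) h1
    rw [Real.norm_eq_abs, abs_of_nonneg g_nonneg]
    exact (g_le hx0.le).trans (Real.exp_le_exp.mpr h2)

lemma hasDerivAt_F {x : ℝ} (hx : 0 < x) :
    HasDerivAt (fun y : ℝ => y ^ 2 / (Real.exp y - 1))
      (2 * (x / (Real.exp x - 1)) - x ^ 2 * Real.exp x / (Real.exp x - 1) ^ 2) x := by
  have hne : Real.exp x - 1 ≠ 0 := (expm1_pos hx).ne'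
  have h1 : HasDerivAt (fun y : ℝ => y ^ 2) (2 * x) x := by
    simpa using hasDerivAt_pow 2 x
  have h2 : HasDerivAt (fun y : ℝ => Real.exp y - 1) (Real.exp x) x :=
    (Real.hasDerivAt_exp x).sub_const 1
  have : HasDerivAt (fun y : ℝ => y ^ 2 / (Real.exp y - 1)) _ x := h1.div h2 hne
  convert this using 1
  field_simp

lemma contOn_F {b : ℝ} : ContinuousOn (fun y : ℝ => y ^ 2 / (Real.exp y - 1)) (Icc 0 b) := by
  intro x hx
  rcases eq_or_lt_of_le hx.1 with h | h
  · subst h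
    have ht : Filter.Tendsto (fun y : ℝ => y ^ 2 / (Real.exp y - 1))
        (nhdsWithin 0 (Icc 0 b)) (nhds 0) := by
      apply tendsto_of_tendsto_of_tendsto_of_le_of_le' (g := fun _ : ℝ => (0:ℝ))
        (h := fun y : ℝ => y) tendsto_const_nhds
        (Filter.tendsto_id.mono_left nhdsWithin_le_nhds)
      · apply eventually_nhdsWithin_of_forall
        intro y hy
        rcases eq_or_lt_of_le hy.1 with h0 | h0
        · simp [← h0]
        · have := expm1_pos h0; positivity
      · apply eventually_nhdsWithin_of_forall
        intro y hy
        rcases eq_or_lt_of_le hy.1 with h0 | h0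
        · simp [← h0]
        · have hd := expm1_pos h0
          have hrw : y ^ 2 / (Real.exp y - 1) = y * (y / (Real.exp y - 1)) := by ring
          rw [hrw]
          nlinarith [f_le_one hy.1, f_nonneg hy.1]
    show Filter.Tendsto _ _ (nhds ((0:ℝ) ^ 2 / (Real.exp 0 - 1)))
    rw [show (0:ℝ) ^ 2 / (Real.exp 0 - 1) = 0 from by norm_num]
    exact ht
  · exact ((continuousAt_pow ..).div
      ((Real.continuous_exp.continuousAt).sub continuousAt_const)
      (expm1_pos h).ne').continuousWithinAt

lemma key_ftc {a b : ℝ} (ha : 0 ≤ a) (hab : a ≤ b) :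
    (2 * ∫ x in a..b, x / (Real.exp x - 1))
      - ∫ x in a..b, x ^ 2 * Real.exp x / (Real.exp x - 1) ^ 2
      = b ^ 2 / (Real.exp b - 1) - a ^ 2 / (Real.exp a - 1) := by
  have hb : 0 ≤ b := ha.trans hab
  have hint : IntervalIntegrable
      (fun x : ℝ => 2 * (x / (Real.exp x - 1)) - x ^ 2 * Real.exp x / (Real.exp x - 1) ^ 2)
      volume a b := ((intInt_f ha hb).const_mul 2).sub (intInt_g ha hb)
  have hcont : ContinuousOn (fun y : ℝ => y ^ 2 / (Real.exp y - 1)) (Icc a b) :=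
    contOn_F.mono (Icc_subset_Icc_left ha)
  have hderiv : ∀ x ∈ Ioo a b, HasDerivAt (fun y : ℝ => y ^ 2 / (Real.exp y - 1))
      (2 * (x / (Real.exp x - 1)) - x ^ 2 * Real.exp x / (Real.exp x - 1) ^ 2) x :=
    fun x hx => hasDerivAt_F (lt_of_le_of_lt ha hx.1)
  have h := intervalIntegral.integral_eq_sub_of_hasDerivAt_of_le hab hcont hderiv hint
  rw [intervalIntegral.integral_sub ((intInt_f ha hb).const_mul 2) (intInt_g ha hb),
    intervalIntegral.integral_const_mul] at h
  exact h

/-- `A(c₁,c₂) = sqrt(∫_0^{c₁} x/(eˣ−1) dx − ∫_{c₂}^{c₁+c₂} x/(eˣ−1) dx)`. -/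
noncomputable def A (c₁ c₂ : ℝ) : ℝ :=
  Real.sqrt ((∫ x in (0 : ℝ)..c₁, x / (Real.exp x - 1)) -
    ∫ x in c₂..(c₁ + c₂), x / (Real.exp x - 1))

theorem L_identity_and_positivity (c₁ c₂ : ℝ) (hc₁ : 0 < c₁) (hc₂ : 0 < c₂) :
    (2 * A c₁ c₂ ^ 2 + (c₁ + c₂) ^ 2 / (Real.exp (c₁ + c₂) - 1)
        - c₁ ^ 2 / (Real.exp c₁ - 1) - c₂ ^ 2 / (Real.exp c₂ - 1) =
      (∫ x in (0 : ℝ)..c₁, x ^ 2 * Real.exp x / (Real.exp x - 1) ^ 2) -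
        ∫ x in c₂..(c₁ + c₂), x ^ 2 * Real.exp x / (Real.exp x - 1) ^ 2) ∧
    (c₁ ≤ c₂ →
      ((∫ x in (0 : ℝ)..c₁, x ^ 2 * Real.exp x / (Real.exp x - 1) ^ 2) -
          ∫ x in c₁..(2 * c₁), x ^ 2 * Real.exp x / (Real.exp x - 1) ^ 2) ≤
        2 * A c₁ c₂ ^ 2 + (c₁ + c₂) ^ 2 / (Real.exp (c₁ + c₂) - 1)
          - c₁ ^ 2 / (Real.exp c₁ - 1) - c₂ ^ 2 / (Real.exp c₂ - 1) ∧
      0 < (∫ x in (0 : ℝ)..c₁, x ^ 2 * Real.exp x / (Real.exp x - 1) ^ 2) -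
          ∫ x in c₁..(2 * c₁), x ^ 2 * Real.exp x / (Real.exp x - 1) ^ 2) := by
  have hc12 : (0:ℝ) < c₁ + c₂ := by linarith
  -- FTC identities
  have h1 := key_ftc (le_refl (0:ℝ)) hc₁.le
  norm_num at h1
  have h2 := key_ftc hc₂.le (by linarith : c₂ ≤ c₁ + c₂)
  -- shift identity for f
  have hshf : (∫ x in (0:ℝ)..c₁, (x + c₂) / (Real.exp (x + c₂) - 1))
      = ∫ x in c₂..(c₁ + c₂), x / (Real.exp x - 1) := by
    have := intervalIntegral.integral_comp_add_right (a := (0:ℝ)) (b := c₁)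
      (fun x : ℝ => x / (Real.exp x - 1)) c₂
    simpa using this
  have hshf_int : IntervalIntegrable (fun x : ℝ => (x + c₂) / (Real.exp (x + c₂) - 1))
      volume 0 c₁ := by
    have h := (intInt_f hc₂.le (by linarith : (0:ℝ) ≤ c₁ + c₂)).comp_add_right c₂
    simpa using h
  -- a.e. x ≠ 0 helper
  have hae : ∀ s : Set ℝ, ∀ᵐ x ∂(volume.restrict s), x ≠ 0 := by
    intro s
    refine (MeasureTheory.ae_iff).mpr ?_
    have hs : {x : ℝ | ¬ x ≠ 0} = {0} := by ext y; simp
    rw [hs]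
    exact measure_singleton 0
  -- If2 ≤ If1
  have hD : (∫ x in c₂..(c₁ + c₂), x / (Real.exp x - 1))
      ≤ ∫ x in (0:ℝ)..c₁, x / (Real.exp x - 1) := by
    rw [← hshf]
    apply intervalIntegral.integral_mono_ae_restrict hc₁.le hshf_int
      (intInt_f le_rfl hc₁.le)
    filter_upwards [hae (Icc 0 c₁), ae_restrict_mem measurableSet_Icc] with x hx0 hx
    exact f_anti (hx.1.lt_of_ne (Ne.symm hx0)) (by linarith)
  have hA : A c₁ c₂ ^ 2 = (∫ x in (0:ℝ)..c₁, x / (Real.exp x - 1))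
      - ∫ x in c₂..(c₁ + c₂), x / (Real.exp x - 1) := by
    rw [A]
    exact Real.sq_sqrt (sub_nonneg.mpr hD)
  constructor
  · linarith [hA, h1, h2]
  intro hc
  -- part 2
  have hident : 2 * A c₁ c₂ ^ 2 + (c₁ + c₂) ^ 2 / (Real.exp (c₁ + c₂) - 1)
        - c₁ ^ 2 / (Real.exp c₁ - 1) - c₂ ^ 2 / (Real.exp c₂ - 1) =
      (∫ x in (0 : ℝ)..c₁, x ^ 2 * Real.exp x / (Real.exp x - 1) ^ 2) -
        ∫ x in c₂..(c₁ + c₂), x ^ 2 * Real.exp x / (Real.exp x - 1) ^ 2 := by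
    linarith [hA, h1, h2]
  -- shift identity for g with d = c₂ - c₁
  have hshg : (∫ x in c₁..(2*c₁),
        (x + (c₂ - c₁)) ^ 2 * Real.exp (x + (c₂ - c₁)) / (Real.exp (x + (c₂ - c₁)) - 1) ^ 2)
      = ∫ x in c₂..(c₁ + c₂), x ^ 2 * Real.exp x / (Real.exp x - 1) ^ 2 := by
    have := intervalIntegral.integral_comp_add_right (a := c₁) (b := 2*c₁)
      (fun x : ℝ => x ^ 2 * Real.exp x / (Real.exp x - 1) ^ 2) (c₂ - c₁)
    rw [show c₁ + (c₂ - c₁) = c₂ by ring, show 2*c₁ + (c₂ - c₁) = c₁ + c₂ by ring] at this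
    exact this
  have hshg_int : IntervalIntegrable (fun x : ℝ =>
      (x + (c₂ - c₁)) ^ 2 * Real.exp (x + (c₂ - c₁)) / (Real.exp (x + (c₂ - c₁)) - 1) ^ 2)
      volume c₁ (2*c₁) := by
    have h := (intInt_g hc₂.le (by linarith : (0:ℝ) ≤ c₁ + c₂)).comp_add_right (c₂ - c₁)
    rw [show c₂ - (c₂ - c₁) = c₁ by ring, show c₁ + c₂ - (c₂ - c₁) = 2*c₁ by ring] at h
    exact h
  have hle2 : (∫ x in c₂..(c₁ + c₂), x ^ 2 * Real.exp x / (Real.exp x - 1) ^ 2)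
      ≤ ∫ x in c₁..(2*c₁), x ^ 2 * Real.exp x / (Real.exp x - 1) ^ 2 := by
    rw [← hshg]
    apply intervalIntegral.integral_mono_on (by linarith) hshg_int
      (intInt_g hc₁.le (by linarith))
    intro x hx
    exact g_anti (by linarith [hx.1]) (by linarith)
  refine ⟨by linarith [hident, hle2], ?_⟩
  -- strict positivity
  have hshg3 : (∫ x in (0:ℝ)..c₁,
        (x + c₁) ^ 2 * Real.exp (x + c₁) / (Real.exp (x + c₁) - 1) ^ 2)
      = ∫ x in c₁..(2*c₁), x ^ 2 * Real.exp x / (Real.exp x - 1) ^ 2 := by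
    have := intervalIntegral.integral_comp_add_right (a := (0:ℝ)) (b := c₁)
      (fun x : ℝ => x ^ 2 * Real.exp x / (Real.exp x - 1) ^ 2) c₁
    rw [show (0:ℝ) + c₁ = c₁ by ring, show c₁ + c₁ = 2*c₁ by ring] at this
    exact this
  have hsh3_int : IntervalIntegrable (fun x : ℝ =>
      (x + c₁) ^ 2 * Real.exp (x + c₁) / (Real.exp (x + c₁) - 1) ^ 2) volume 0 c₁ := by
    have h := (intInt_g hc₁.le (by linarith : (0:ℝ) ≤ 2*c₁)).comp_add_right c₁
    rw [show c₁ - c₁ = (0:ℝ) by ring, show 2*c₁ - c₁ = c₁ by ring] at h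
    exact h
  set h : ℝ → ℝ := fun x => x ^ 2 * Real.exp x / (Real.exp x - 1) ^ 2
    - (x + c₁) ^ 2 * Real.exp (x + c₁) / (Real.exp (x + c₁) - 1) ^ 2 with hh
  have hint_h : IntervalIntegrable h volume 0 c₁ :=
    (intInt_g le_rfl hc₁.le).sub hsh3_int
  have hsplit : (∫ x in (0:ℝ)..(c₁/2), h x) + (∫ x in (c₁/2)..c₁, h x)
      = ∫ x in (0:ℝ)..c₁, h x := by
    apply intervalIntegral.integral_add_adjacent_intervals
    · exact hint_h.mono_set (by
        rw [Set.uIcc_of_le (by linarith : (0:ℝ) ≤ c₁/2), Set.uIcc_of_le hc₁.le]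
        exact Icc_subset_Icc le_rfl (by linarith))
    · exact hint_h.mono_set (by
        rw [Set.uIcc_of_le (by linarith : c₁/2 ≤ c₁), Set.uIcc_of_le hc₁.le]
        exact Icc_subset_Icc (by linarith) le_rfl)
  have hp1 : 0 ≤ ∫ x in (0:ℝ)..(c₁/2), h x := by
    apply intervalIntegral.integral_nonneg_of_ae_restrict (by linarith : (0:ℝ) ≤ c₁/2)
    filter_upwards [hae (Icc 0 (c₁/2)), ae_restrict_mem measurableSet_Icc] with x hx0 hx
    have hxpos : 0 < x := hx.1.lt_of_ne (Ne.symm hx0)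
    have := g_anti_strict hxpos (by linarith : x < x + c₁)
    simp only [hh, Pi.zero_apply]
    linarith
  have hp2 : 0 < ∫ x in (c₁/2)..c₁, h x := by
    apply intervalIntegral.intervalIntegral_pos_of_pos_on
    · exact hint_h.mono_set (by
        rw [Set.uIcc_of_le (by linarith : c₁/2 ≤ c₁), Set.uIcc_of_le hc₁.le]
        exact Icc_subset_Icc (by linarith) le_rfl)
    · intro x hx
      have hxpos : 0 < x := by linarith [hx.1]
      have := g_anti_strict hxpos (by linarith : x < x + c₁)
      simp only [hh]
      linarith
    · linarith
  have hsub : (∫ x in (0:ℝ)..c₁, h x)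
      = (∫ x in (0:ℝ)..c₁, x ^ 2 * Real.exp x / (Real.exp x - 1) ^ 2)
        - ∫ x in (0:ℝ)..c₁, (x + c₁) ^ 2 * Real.exp (x + c₁) / (Real.exp (x + c₁) - 1) ^ 2 :=
    intervalIntegral.integral_sub (intInt_g le_rfl hc₁.le) hsh3_int
  rw [hshg3] at hsub
  linarith [hsplit, hp1, hp2, hsub]
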